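/- (Proposition 3.) Let 0 < p < p̂ < 1. For q ∈ {p, p̂} define f(x, q) = U(x, θ_L) − q U(x, θ_H) − (1−q) g(x), and suppose x_L*(p) satisfies ∂f/∂x(x_L*(p), p) = 0 and x_L*(p̂) satisfies ∂f/∂x(x_L*(p̂), p̂) = 0. Assume x ↦ ∂f/∂x(x, p̂) is strictly decreasing (strictly antitone), and that d/dx[U(x, θ_H) − g(x)] evaluated at x_L*(p) is strictly positive. Then x_L*(p) > x_L*(p̂): the optimal privacy setting of the low type is decreasing in the fraction p of high types. -/

import Mathlib

/-- Proposition 3: the optimal privacy setting of the low type is decreasing in the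
fraction `p` of high types. -/
theorem stmt_10 (U : ℝ → ℝ → ℝ) (g : ℝ → ℝ) (f : ℝ → ℝ → ℝ)
    (θL θH p phat xLp xLphat : ℝ)
    (hθ : θL < θH) (hp0 : 0 < p) (hpp : p < phat) (hp1 : phat < 1)
    (hf : ∀ x q, f x q = U x θL - q * U x θH - (1 - q) * g x)
    (hdiffL : Differentiable ℝ (fun x => U x θL))
    (hdiffH : Differentiable ℝ (fun x => U x θH))
    (hdiffg : Differentiable ℝ g)
    (hfocp : deriv (fun x => f x p) xLp = 0)
    (hfocphat : deriv (fun x => f x phat) xLphat = 0)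
    (hanti : StrictAnti (fun x => deriv (fun y => f y phat) x))
    (hpos : 0 < deriv (fun x => U x θH - g x) xLp) :
    xLp > xLphat := by
  have key : ∀ q x₀, deriv (fun x => f x q) x₀ =
      deriv (fun x => U x θL) x₀ - q * deriv (fun x => U x θH) x₀
        - (1 - q) * deriv g x₀ := by
    intro q x₀
    have h1 : (fun x => f x q) = fun x => U x θL - q * U x θH - (1 - q) * g x := by
      funext x; exact hf x q
    rw [h1]
    rw [deriv_fun_sub (f := fun x => U x θL - q * U x θH) (g := fun x => (1 - q) * g x) (((hdiffL x₀).sub ((hdiffH x₀).const_mul q)))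
        ((hdiffg x₀).const_mul (1 - q)),
      deriv_fun_sub (hdiffL x₀) ((hdiffH x₀).const_mul q),
      deriv_const_mul q (hdiffH x₀), deriv_const_mul (1 - q) (hdiffg x₀)]
  have hHg : deriv (fun x => U x θH - g x) xLp =
      deriv (fun x => U x θH) xLp - deriv g xLp :=
    deriv_sub (hdiffH xLp) (hdiffg xLp)
  have hlt : deriv (fun y => f y phat) xLp < deriv (fun y => f y phat) xLphat := by
    rw [hfocphat, key phat xLp]
    have h0 : deriv (fun x => U x θL) xLp - p * deriv (fun x => U x θH) xLp
        - (1 - p) * deriv g xLp = 0 := by rw [← key p xLp]; exact hfocp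
    nlinarith [hpos, hHg, hpp]
  exact hanti.lt_iff_gt.mp hlt
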